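/- Let w : ℤ → ℝ be given by the block structure: w_n = 2 for n ≥ 0, and on the negative integers w consists of consecutive blocks B_n (n = 1, 2, 3, ...) reading leftwards from −1, where B_n has 2n entries: n entries equal to 2^{(−1)^{n+1}} followed (further left) by n entries equal to 2^{(−1)^n}. Then for every i ∈ ℤ there is a constant C > 0 such that for all n ∈ ℕ with n − i ∈ ⋃_{m∈ℕ}(−I_{2m−1}) (the union of odd blocks' index sets shifted by i), the product |w_{i−n} ⋯ w_{i−1}| ≥ C. -/

import Mathlib

open Finset

section aux

variable (w : ℤ → ℝ)

-- every k ≥ 1 lies in some block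
lemma aux_block_exists (k : ℕ) (hk : 1 ≤ k) :
    ∃ n : ℕ, 1 ≤ n ∧ n * (n - 1) < k ∧ k ≤ n * (n + 1) := by
  obtain ⟨s, hs⟩ : ∃ s, Nat.sqrt k = s := ⟨_, rfl⟩
  have h1 : s * s ≤ k := by have := Nat.sqrt_le' k; rw [hs] at this; simpa [pow_two] using this
  have h2 : k < (s + 1) * (s + 1) := by
    have := Nat.lt_succ_sqrt' k; rw [hs] at this; simpa [pow_two, Nat.succ_eq_add_one] using this
  have hs1 : 1 ≤ s := by
    rcases Nat.eq_zero_or_pos s with h | h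
    · exfalso; rw [h] at h2; omega
    · exact h
  by_cases hc : k ≤ s * (s + 1)
  · refine ⟨s, hs1, ?_, hc⟩
    obtain ⟨t, rfl⟩ : ∃ t, s = t + 1 := ⟨s - 1, by omega⟩
    have : (t + 1) * t < (t + 1) * (t + 1) := by nlinarith
    simpa using lt_of_lt_of_le (by simpa using this) h1
  · refine ⟨s + 1, by omega, ?_, ?_⟩
    · simpa [Nat.add_sub_cancel, mul_comm] using (by omega : s * (s + 1) < k)
    · nlinarith

variable
    (hblock₁ : ∀ n : ℕ, 1 ≤ n → ∀ j : ℕ, n * (n - 1) < j → j ≤ n * n →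
      w (-(j : ℤ)) = (2 : ℝ) ^ ((-1 : ℤ) ^ (n + 1)))
    (hblock₂ : ∀ n : ℕ, 1 ≤ n → ∀ j : ℕ, n * n < j → j ≤ n * (n + 1) →
      w (-(j : ℤ)) = (2 : ℝ) ^ ((-1 : ℤ) ^ n))

include hblock₁ hblock₂ in
lemma aux_w_bounds (k : ℕ) (hk : 1 ≤ k) :
    0 < w (-(k : ℤ)) ∧ w (-(k : ℤ)) ≤ 2 := by
  obtain ⟨n, hn, hlt, hle⟩ := aux_block_exists k hk
  have key : ∃ e : ℕ, w (-(k : ℤ)) = (2 : ℝ) ^ ((-1 : ℤ) ^ e) := by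
    by_cases hc : k ≤ n * n
    · exact ⟨n + 1, hblock₁ n hn k hlt hc⟩
    · exact ⟨n, hblock₂ n hn k (by omega) hle⟩
  obtain ⟨e, he⟩ := key
  rcases Nat.even_or_odd e with h | h
  · rw [he, h.neg_one_pow, zpow_one]; norm_num
  · rw [he, h.neg_one_pow, zpow_neg_one]; norm_num

include hblock₁ hblock₂ in
lemma aux_P_pos (N : ℕ) : 0 < ∏ k ∈ Ioc 0 N, w (-(k : ℤ)) := by
  apply Finset.prod_pos
  intro k hk
  exact (aux_w_bounds w hblock₁ hblock₂ k (mem_Ioc.mp hk).1).1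

include hblock₁ hblock₂ in
lemma aux_P_le (N : ℕ) : ∏ k ∈ Ioc 0 N, w (-(k : ℤ)) ≤ 2 ^ N := by
  calc ∏ k ∈ Ioc 0 N, w (-(k : ℤ)) ≤ ∏ _k ∈ Ioc 0 N, (2 : ℝ) := by
        apply Finset.prod_le_prod
        · intro k hk
          exact (aux_w_bounds w hblock₁ hblock₂ k (mem_Ioc.mp hk).1).1.le
        · intro k hk
          exact (aux_w_bounds w hblock₁ hblock₂ k (mem_Ioc.mp hk).1).2
    _ = 2 ^ N := by rw [Finset.prod_const, Nat.card_Ioc, Nat.sub_zero]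

include hblock₁ hblock₂ in
lemma aux_P_complete : ∀ n : ℕ, ∏ k ∈ Ioc 0 (n * (n + 1)), w (-(k : ℤ)) = 1 := by
  intro n
  induction n with
  | zero => simp
  | succ n ih =>
    set a := n * (n + 1) with ha
    set b := (n + 1) * (n + 1) with hb
    set c := (n + 1) * (n + 2) with hc
    have hba : b = a + (n + 1) := by rw [ha, hb]; ring
    have hcb : c = b + (n + 1) := by rw [hb, hc]; ring
    have hab : a ≤ b := by omega
    have hbc : b ≤ c := by omega
    have split1 : (∏ k ∈ Ioc 0 a, w (-(k:ℤ))) * (∏ k ∈ Ioc a b, w (-(k:ℤ)))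
        = ∏ k ∈ Ioc 0 b, w (-(k:ℤ)) :=
      Finset.prod_Ioc_consecutive _ (Nat.zero_le a) hab
    have split2 : (∏ k ∈ Ioc 0 b, w (-(k:ℤ))) * (∏ k ∈ Ioc b c, w (-(k:ℤ)))
        = ∏ k ∈ Ioc 0 c, w (-(k:ℤ)) :=
      Finset.prod_Ioc_consecutive _ (Nat.zero_le b) hbc
    have h1 : ∏ k ∈ Ioc a b, w (-(k:ℤ)) = ((2:ℝ) ^ ((-1:ℤ) ^ (n + 2))) ^ (n + 1) := by
      rw [Finset.prod_congr rfl (fun k hk => ?_), Finset.prod_const, Nat.card_Ioc]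
      · congr 1; omega
      · rw [mem_Ioc] at hk
        have := hblock₁ (n + 1) (by omega) k (by simpa [Nat.add_sub_cancel, mul_comm] using hk.1) (hk.2)
        simpa using this
    have h2 : ∏ k ∈ Ioc b c, w (-(k:ℤ)) = ((2:ℝ) ^ ((-1:ℤ) ^ (n + 1))) ^ (n + 1) := by
      rw [Finset.prod_congr rfl (fun k hk => ?_), Finset.prod_const, Nat.card_Ioc]
      · congr 1; omega
      · rw [mem_Ioc] at hk
        have := hblock₂ (n + 1) (by omega) k hk.1 (hk.2)
        simpa using this
    have key : ∏ k ∈ Ioc 0 ((n+1) * (n + 2)), w (-(k:ℤ)) = ∏ k ∈ Ioc 0 c, w (-(k:ℤ)) := rfl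
    rw [key, ← split2, ← split1, ih, one_mul, h1, h2, ← mul_pow,
      ← zpow_add₀ (two_ne_zero (α := ℝ))]
    have : (-1:ℤ) ^ (n + 2) + (-1:ℤ) ^ (n + 1) = 0 := by
      rw [pow_succ]; ring
    rw [this, zpow_zero, one_pow]

include hblock₁ hblock₂ in
lemma aux_P_odd (m : ℕ) (hm : 1 ≤ m) (N : ℕ)
    (h1 : (2 * m - 1) * (2 * m - 2) < N) (h2 : N ≤ (2 * m - 1) * (2 * m)) :
    1 ≤ ∏ k ∈ Ioc 0 N, w (-(k : ℤ)) := by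
  set n := 2 * m - 1 with hn
  have hn1 : 1 ≤ n := by omega
  have hodd : Odd n := ⟨m - 1, by omega⟩
  have heven : Even (n + 1) := ⟨m, by omega⟩
  -- P (n * (n-1)) = 1
  have hbase : ∏ k ∈ Ioc 0 (n * (n - 1)), w (-(k:ℤ)) = 1 := by
    have h : n * (n - 1) = (n - 1) * ((n - 1) + 1) := by
      rw [mul_comm]; congr 1; omega
    rw [h]; exact aux_P_complete w hblock₁ hblock₂ (n - 1)
  have hfirst : ∀ k, n * (n - 1) < k → k ≤ n * n → w (-(k:ℤ)) = 2 := by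
    intro k hk1 hk2
    rw [hblock₁ n hn1 k hk1 hk2, heven.neg_one_pow, zpow_one]
  have hsecond : ∀ k, n * n < k → k ≤ n * (n + 1) → w (-(k:ℤ)) = 2⁻¹ := by
    intro k hk1 hk2
    rw [hblock₂ n hn1 k hk1 hk2, hodd.neg_one_pow, zpow_neg_one]
  have hlo : n * (n - 1) < N := by
    calc n * (n - 1) = (2 * m - 1) * (2 * m - 2) := by congr 1 <;> omega
    _ < N := h1
  have hhi : N ≤ n * (n + 1) := by
    calc N ≤ (2 * m - 1) * (2 * m) := h2
    _ = n * (n + 1) := by congr 1 <;> omega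
  by_cases hc : N ≤ n * n
  · have split : (∏ k ∈ Ioc 0 (n*(n-1)), w (-(k:ℤ))) * (∏ k ∈ Ioc (n*(n-1)) N, w (-(k:ℤ)))
        = ∏ k ∈ Ioc 0 N, w (-(k:ℤ)) :=
      Finset.prod_Ioc_consecutive _ (Nat.zero_le _) hlo.le
    rw [← split, hbase, one_mul]
    have : ∏ k ∈ Ioc (n*(n-1)) N, w (-(k:ℤ)) = (2:ℝ) ^ (N - n*(n-1)) := by
      rw [Finset.prod_congr rfl (fun k hk => ?_), Finset.prod_const, Nat.card_Ioc]
      rw [mem_Ioc] at hk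
      exact hfirst k hk.1 (le_trans hk.2 hc)
    rw [this]
    exact one_le_pow₀ (by norm_num)
  · push_neg at hc
    have hnn : n * (n - 1) ≤ n * n := Nat.mul_le_mul_left n (by omega)
    have split1 : (∏ k ∈ Ioc 0 (n*(n-1)), w (-(k:ℤ))) * (∏ k ∈ Ioc (n*(n-1)) (n*n), w (-(k:ℤ)))
        = ∏ k ∈ Ioc 0 (n*n), w (-(k:ℤ)) :=
      Finset.prod_Ioc_consecutive _ (Nat.zero_le _) hnn
    have split2 : (∏ k ∈ Ioc 0 (n*n), w (-(k:ℤ))) * (∏ k ∈ Ioc (n*n) N, w (-(k:ℤ)))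
        = ∏ k ∈ Ioc 0 N, w (-(k:ℤ)) :=
      Finset.prod_Ioc_consecutive _ (Nat.zero_le _) hc.le
    have e1 : ∏ k ∈ Ioc (n*(n-1)) (n*n), w (-(k:ℤ)) = (2:ℝ) ^ n := by
      rw [Finset.prod_congr rfl (fun k hk => ?_), Finset.prod_const, Nat.card_Ioc]
      · congr 1
        have : n * n = n * (n - 1) + n := by
          obtain ⟨t, ht⟩ : ∃ t, n = t + 1 := ⟨n - 1, by omega⟩
          rw [ht]; simp; ring
        omega
      · rw [mem_Ioc] at hk
        exact hfirst k hk.1 hk.2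
    have e2 : ∏ k ∈ Ioc (n*n) N, w (-(k:ℤ)) = ((2:ℝ)⁻¹) ^ (N - n*n) := by
      rw [Finset.prod_congr rfl (fun k hk => ?_), Finset.prod_const, Nat.card_Ioc]
      rw [mem_Ioc] at hk
      exact hsecond k hk.1 (le_trans hk.2 hhi)
    have hd : N - n * n ≤ n := by
      have : n * (n + 1) = n * n + n := by ring
      omega
    rw [← split2, ← split1, hbase, one_mul, e1, e2]
    calc (1:ℝ) = 2 ^ n * (2⁻¹) ^ n := by
          rw [← mul_pow]; norm_num
      _ ≤ 2 ^ n * (2⁻¹) ^ (N - n * n) := by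
          apply mul_le_mul_of_nonneg_left _ (by positivity)
          exact pow_le_pow_of_le_one (by norm_num) (by norm_num) hd

end aux

theorem stmt_16 (w : ℤ → ℝ)
    (hpos : ∀ m : ℤ, 0 ≤ m → w m = 2)
    (hblock₁ : ∀ n : ℕ, 1 ≤ n → ∀ j : ℕ, n * (n - 1) < j → j ≤ n * n →
      w (-(j : ℤ)) = (2 : ℝ) ^ ((-1 : ℤ) ^ (n + 1)))
    (hblock₂ : ∀ n : ℕ, 1 ≤ n → ∀ j : ℕ, n * n < j → j ≤ n * (n + 1) →
      w (-(j : ℤ)) = (2 : ℝ) ^ ((-1 : ℤ) ^ n)) :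
    ∀ i : ℤ, ∃ C > (0 : ℝ), ∀ n : ℕ, 1 ≤ n →
      (∃ m : ℕ, 1 ≤ m ∧
        (2 * (m : ℤ) - 1) * (2 * (m : ℤ) - 2) < (n : ℤ) - i ∧
        (n : ℤ) - i ≤ (2 * (m : ℤ) - 1) * (2 * (m : ℤ))) →
      C ≤ |∏ j ∈ Finset.Icc 1 n, w (i - (j : ℤ))| := by
  intro i
  -- cast lemma for block bounds
  have castlem : ∀ (m : ℕ), 1 ≤ m →
      (((2 * m - 1) * (2 * m - 2) : ℕ) : ℤ) = (2 * (m:ℤ) - 1) * (2 * (m:ℤ) - 2) ∧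
      (((2 * m - 1) * (2 * m) : ℕ) : ℤ) = (2 * (m:ℤ) - 1) * (2 * (m:ℤ)) := by
    intro m hm
    constructor <;>
    · push_cast [Nat.cast_sub (show 1 ≤ 2 * m by omega), Nat.cast_sub (show 2 ≤ 2 * m by omega)]
      ring
  rcases le_or_gt i 0 with hi | hi
  · -- i ≤ 0, C = (2^a)⁻¹ with a = (-i).toNat
    set a := (-i).toNat with haa
    have hia : i = -(a : ℤ) := by omega
    refine ⟨((2:ℝ) ^ a)⁻¹, by positivity, ?_⟩
    intro n hn ⟨m, hm, hb1, hb2⟩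
    have hNi : (n : ℤ) - i = ((n + a : ℕ) : ℤ) := by omega
    rw [hNi] at hb1 hb2
    obtain ⟨c1, c2⟩ := castlem m hm
    have hb1' : (2 * m - 1) * (2 * m - 2) < n + a := by exact_mod_cast c1 ▸ hb1
    have hb2' : n + a ≤ (2 * m - 1) * (2 * m) := by exact_mod_cast c2 ▸ hb2
    have hP : 1 ≤ ∏ k ∈ Finset.Ioc 0 (n + a), w (-(k:ℤ)) :=
      aux_P_odd w hblock₁ hblock₂ m hm (n + a) hb1' hb2'
    -- Q = ∏ Ioc a (a+n)
    have hQ : ∏ j ∈ Finset.Icc 1 n, w (i - (j : ℤ))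
        = ∏ k ∈ Finset.Ioc a (a + n), w (-(k:ℤ)) := by
      rw [show Finset.Ioc a (a + n) = Finset.map (addLeftEmbedding a) (Finset.Ioc 0 n) by
        rw [Finset.map_add_left_Ioc, Nat.add_zero],
        Finset.prod_map, show (1:ℕ) = 0 + 1 from rfl, Finset.Icc_add_one_left_eq_Ioc]
      apply Finset.prod_congr rfl
      intro j hj
      simp only [addLeftEmbedding_apply]
      congr 1
      rw [hia]; push_cast; ring
    have hsplit : (∏ k ∈ Finset.Ioc 0 a, w (-(k:ℤ))) * (∏ k ∈ Finset.Ioc a (a + n), w (-(k:ℤ)))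
        = ∏ k ∈ Finset.Ioc 0 (a + n), w (-(k:ℤ)) :=
      Finset.prod_Ioc_consecutive _ (Nat.zero_le a) (Nat.le_add_right a n)
    have hPa_pos : 0 < ∏ k ∈ Finset.Ioc 0 a, w (-(k:ℤ)) := aux_P_pos w hblock₁ hblock₂ a
    have hPa_le : ∏ k ∈ Finset.Ioc 0 a, w (-(k:ℤ)) ≤ 2 ^ a := aux_P_le w hblock₁ hblock₂ a
    have hQpos : 0 < ∏ k ∈ Finset.Ioc a (a + n), w (-(k:ℤ)) := by
      apply Finset.prod_pos
      intro k hk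
      exact (aux_w_bounds w hblock₁ hblock₂ k (by have := (Finset.mem_Ioc.mp hk).1; omega)).1
    rw [hQ, abs_of_pos hQpos]
    have key : 1 ≤ (∏ k ∈ Finset.Ioc 0 a, w (-(k:ℤ))) * (∏ k ∈ Finset.Ioc a (a + n), w (-(k:ℤ))) := by
      rw [hsplit]
      convert hP using 3
      omega
    calc ((2:ℝ) ^ a)⁻¹ ≤ (∏ k ∈ Finset.Ioc 0 a, w (-(k:ℤ)))⁻¹ :=
          inv_anti₀ hPa_pos hPa_le
      _ ≤ ∏ k ∈ Finset.Ioc a (a + n), w (-(k:ℤ)) := by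
          rw [inv_le_iff_one_le_mul₀ hPa_pos]
          linarith [key]
  · -- i > 0, C = 1
    set a := i.toNat with haa
    have hia : i = (a : ℤ) := by omega
    refine ⟨1, one_pos, ?_⟩
    intro n hn ⟨m, hm, hb1, hb2⟩
    have hpos0 : (0:ℤ) ≤ (2 * (m:ℤ) - 1) * (2 * (m:ℤ) - 2) := by
      apply mul_nonneg <;> omega
    have hni : (a:ℤ) < n := by omega
    have han : a < n := by exact_mod_cast hni
    have hNi : (n : ℤ) - i = ((n - a : ℕ) : ℤ) := by omega
    rw [hNi] at hb1 hb2
    obtain ⟨c1, c2⟩ := castlem m hm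
    have hb1' : (2 * m - 1) * (2 * m - 2) < n - a := by exact_mod_cast c1 ▸ hb1
    have hb2' : n - a ≤ (2 * m - 1) * (2 * m) := by exact_mod_cast c2 ▸ hb2
    have hP : 1 ≤ ∏ k ∈ Finset.Ioc 0 (n - a), w (-(k:ℤ)) :=
      aux_P_odd w hblock₁ hblock₂ m hm (n - a) hb1' hb2'
    have hsplit : (∏ j ∈ Finset.Ioc 0 a, w (i - (j:ℤ))) * (∏ j ∈ Finset.Ioc a n, w (i - (j:ℤ)))
        = ∏ j ∈ Finset.Ioc 0 n, w (i - (j:ℤ)) :=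
      Finset.prod_Ioc_consecutive _ (Nat.zero_le a) han.le
    have e1 : ∏ j ∈ Finset.Ioc 0 a, w (i - (j:ℤ)) = 2 ^ a := by
      rw [Finset.prod_congr rfl (fun j hj => ?_), Finset.prod_const, Nat.card_Ioc, Nat.sub_zero]
      rw [Finset.mem_Ioc] at hj
      apply hpos
      rw [hia]
      have : (j:ℤ) ≤ (a:ℤ) := by exact_mod_cast hj.2
      omega
    have e2 : ∏ j ∈ Finset.Ioc a n, w (i - (j:ℤ)) = ∏ k ∈ Finset.Ioc 0 (n - a), w (-(k:ℤ)) := by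
      rw [show Finset.Ioc a n = Finset.map (addLeftEmbedding a) (Finset.Ioc 0 (n - a)) by
        rw [Finset.map_add_left_Ioc, Nat.add_zero]; congr 1; omega,
        Finset.prod_map]
      apply Finset.prod_congr rfl
      intro k hk
      simp only [addLeftEmbedding_apply]
      congr 1
      rw [hia]; push_cast; ring
    have hQ : ∏ j ∈ Finset.Icc 1 n, w (i - (j : ℤ)) = ∏ j ∈ Finset.Ioc 0 n, w (i - (j:ℤ)) := by
      rw [show (1:ℕ) = 0 + 1 from rfl, Finset.Icc_add_one_left_eq_Ioc]
    rw [hQ, ← hsplit, e1, e2]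
    have h2a : (1:ℝ) ≤ 2 ^ a := one_le_pow₀ (by norm_num)
    have habs : |(2:ℝ) ^ a * ∏ k ∈ Finset.Ioc 0 (n - a), w (-(k:ℤ))|
        = 2 ^ a * ∏ k ∈ Finset.Ioc 0 (n - a), w (-(k:ℤ)) := by
      apply abs_of_pos
      exact mul_pos (by positivity) (aux_P_pos w hblock₁ hblock₂ _)
    rw [habs]
    nlinarith [aux_P_pos w hblock₁ hblock₂ (n - a)]
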